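/- Every n-element semiorder is determined up to isomorphism by the vector (r_1,...,r_n) where r_i is the number of elements strictly below the i-th element, listed in weakly decreasing order; this vector satisfies r_1 ≥ r_2 ≥ ... ≥ r_n ≥ 0 and r_i ≤ n−i for all i. Conversely, every such vector arises from a semiorder. -/

import Mathlib

namespace Paper

/-- Two elements are incomparable. -/
def Incomp {α : Type*} [PartialOrder α] (a b : α) : Prop := ¬ a ≤ b ∧ ¬ b ≤ a

/-- A semiorder: no induced `2+2` and no induced `3+1`. -/
def IsSemiorder (α : Type*) [PartialOrder α] : Prop :=
  (¬ ∃ x y z w : α, y < x ∧ w < z ∧ Incomp x z ∧ Incomp x w ∧ Incomp y z ∧ Incomp y w) ∧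
  (¬ ∃ x y z w : α, z < y ∧ y < x ∧ Incomp x w ∧ Incomp y w ∧ Incomp z w)

/-- There is a chain of `k` elements. -/
def HasChain (α : Type*) [Preorder α] (k : ℕ) : Prop := ∃ c : Fin k → α, StrictMono c

/-- The length of a longest chain (number of edges) is exactly `H`. -/
def HasLength (α : Type*) [Preorder α] (H : ℕ) : Prop :=
  HasChain α (H + 1) ∧ ¬ HasChain α (H + 2)

/-- There is a chain of `k` elements all strictly above `a`. -/
def HasChainAbove {α : Type*} [Preorder α] (a : α) (k : ℕ) : Prop :=
  ∃ c : Fin k → α, StrictMono c ∧ ∀ j, a < c j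

/-- `a` is on the `i`-th level (`i ≥ 1`). -/
def OnLevel {α : Type*} [Preorder α] (a : α) (i : ℕ) : Prop :=
  1 ≤ i ∧ HasChainAbove a (i - 1) ∧ ¬ HasChainAbove a i

/-- Number of isomorphism classes of partial orders on `Fin n` satisfying `pred`. -/
noncomputable def countPosets (n : ℕ) (pred : PartialOrder (Fin n) → Prop) : ℕ :=
  Nat.card (Quot (fun (P Q : {P : PartialOrder (Fin n) // pred P}) =>
    ∃ e : Fin n ≃ Fin n, ∀ a b : Fin n,
      (@LE.le _ P.1.toPreorder.toLE a b ↔ @LE.le _ Q.1.toPreorder.toLE (e a) (e b))))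

/-- Semiorder of length exactly `H`. -/
def SemiLen (n H : ℕ) (P : PartialOrder (Fin n)) : Prop :=
  @IsSemiorder (Fin n) P ∧ @HasLength (Fin n) P.toPreorder H

/-- Semiorder of length at most `h`. -/
def SemiLenLe (n h : ℕ) (P : PartialOrder (Fin n)) : Prop :=
  @IsSemiorder (Fin n) P ∧ ¬ @HasChain (Fin n) P.toPreorder (h + 2)

/-- `f_H^n`. -/
noncomputable def fEx (H n : ℕ) : ℕ := countPosets n (SemiLen n H)

/-- `f_{≤h}^n`. -/
noncomputable def fLe (h n : ℕ) : ℕ := countPosets n (SemiLenLe n h)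

/-- Ordered (plane) trees. -/
inductive PTree where
  | node : List PTree → PTree

def PTree.size : PTree → ℕ
  | .node cs => 1 + (cs.attach.map fun c => PTree.size c.1).sum
decreasing_by have := List.sizeOf_lt_of_mem c.2; simp only [PTree.node.sizeOf_spec] at *; omega

def PTree.height : PTree → ℕ
  | .node cs => (cs.attach.map fun c => PTree.height c.1 + 1).foldr max 0
decreasing_by have := List.sizeOf_lt_of_mem c.2; simp only [PTree.node.sizeOf_spec] at *; omega

def PTree.countDepth : PTree → ℕ → ℕ
  | .node _, 0 => 1
  | .node cs, d + 1 => (cs.attach.map fun c => PTree.countDepth c.1 d).sum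
termination_by t _ => sizeOf t
decreasing_by have := List.sizeOf_lt_of_mem c.2; simp only [PTree.node.sizeOf_spec] at *; omega

/-- Value of a path after the steps in `l` (`true` = up-step, `false` = down-step). -/
def pathVal (l : List Bool) : ℤ := (l.map fun b => if b then (1 : ℤ) else -1).sum

/-- `l` is a Dyck path. -/
def IsDyckPath (l : List Bool) : Prop :=
  pathVal l = 0 ∧ ∀ p, p <+: l → 0 ≤ pathVal p

/-- The height of the path `l` is exactly `H`. -/
def DyckHeightIs (l : List Bool) (H : ℕ) : Prop :=
  (∃ p, p <+: l ∧ pathVal p = H) ∧ ∀ p, p <+: l → pathVal p ≤ (H : ℤ)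

/-- Number of peaks of a path. -/
def peaks (l : List Bool) : ℕ :=
  ((List.range l.length).filter fun i => l.getD i false && !(l.getD (i + 1) true)).length


/-- The number of elements strictly below `x` in the poset `P`. -/
noncomputable def downDeg {n : ℕ} (P : PartialOrder (Fin n)) (x : Fin n) : ℕ :=
  Nat.card {y : Fin n // @LT.lt _ P.toPreorder.toLT y x}

/-- The multiset of down-degrees of the poset `P`. -/
noncomputable def degMultiset {n : ℕ} (P : PartialOrder (Fin n)) : Multiset ℕ :=
  Finset.univ.val.map (downDeg P)

section Aux

variable {α : Type*} [Fintype α] [PartialOrder α]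

noncomputable def UpS (x : α) : Finset α :=
  @Finset.filter α (fun y => x < y) (Classical.decPred _) Finset.univ

noncomputable def DnS (x : α) : Finset α :=
  @Finset.filter α (fun y => y < x) (Classical.decPred _) Finset.univ

lemma mem_UpS {x y : α} : y ∈ UpS x ↔ x < y := by
  simp [UpS, Finset.mem_filter]

lemma mem_DnS {x y : α} : y ∈ DnS x ↔ y < x := by
  simp [DnS, Finset.mem_filter]

lemma natCard_lt_eq (x : α) : Nat.card {y : α // y < x} = (DnS x).card := by
  classical
  rw [Nat.card_eq_fintype_card, Fintype.card_subtype]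
  congr 1

lemma upS_nested (h : IsSemiorder α) (a b : α) : UpS a ⊆ UpS b ∨ UpS b ⊆ UpS a := by
  by_contra hc
  push_neg at hc
  obtain ⟨h1, h2⟩ := hc
  obtain ⟨p, hpa, hpb⟩ := Finset.not_subset.mp h1
  obtain ⟨q, hqb, hqa⟩ := Finset.not_subset.mp h2
  rw [mem_UpS] at hpa hqb
  rw [mem_UpS] at hpb hqa
  refine h.1 ⟨p, a, q, b, hpa, hqb, ?_, ?_, ?_, ?_⟩
  · exact ⟨fun hle => hqa (lt_of_lt_of_le hpa hle),
      fun hle => hpb (lt_of_lt_of_le hqb hle)⟩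
  · refine ⟨fun hle => hqa ((lt_of_lt_of_le hpa hle).trans hqb), fun hle => ?_⟩
    rcases eq_or_lt_of_le hle with rfl | hlt
    · exact hqa (hpa.trans hqb)
    · exact hpb hlt
  · refine ⟨fun hle => ?_, fun hle => hpb ((lt_of_lt_of_le hqb hle).trans hpa)⟩
    rcases eq_or_lt_of_le hle with rfl | hlt
    · exact hpb (hqb.trans hpa)
    · exact hqa hlt
  · exact ⟨fun hle => hqa (lt_of_le_of_lt hle hqb),
      fun hle => hpb (lt_of_le_of_lt hle hpa)⟩

lemma upS_subset_of_card_le (h : IsSemiorder α) {a b : α}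
    (hc : (UpS a).card ≤ (UpS b).card) : UpS a ⊆ UpS b := by
  rcases upS_nested h a b with h1 | h1
  · exact h1
  · exact (Finset.eq_of_subset_of_card_le h1 hc).ge

lemma dnS_subset_of_upS_ssubset (h : IsSemiorder α) {a b : α}
    (hss : UpS a ⊂ UpS b) : DnS b ⊆ DnS a := by
  intro w hw
  rw [mem_DnS] at hw
  rw [mem_DnS]
  by_contra hwa
  obtain ⟨z, hzb, hza⟩ := Finset.exists_of_ssubset hss
  rw [mem_UpS] at hzb
  rw [mem_UpS] at hza
  refine h.2 ⟨z, b, w, a, hw, hzb, ?_, ?_, ?_⟩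
  · refine ⟨fun hle => hwa (hw.trans (lt_of_lt_of_le hzb hle)), fun hle => ?_⟩
    rcases eq_or_lt_of_le hle with rfl | hlt
    · exact hwa (hw.trans hzb)
    · exact hza hlt
  · refine ⟨fun hle => hwa (lt_of_lt_of_le hw hle), fun hle => ?_⟩
    rcases eq_or_lt_of_le hle with rfl | hlt
    · exact (Finset.ssubset_iff_subset_ne.mp hss).2 rfl
    · exact hza (hlt.trans hzb)
  · refine ⟨fun hle => ?_, fun hle => ?_⟩
    · rcases eq_or_lt_of_le hle with rfl | hlt
      · exact hza (hw.trans hzb)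
      · exact hwa hlt
    · rcases eq_or_lt_of_le hle with rfl | hlt
      · exact hza (hw.trans hzb)
      · exact hza ((hlt.trans hw).trans hzb)

lemma count_dd (k : ℕ) :
    (Finset.univ.filter (fun x : α => k ≤ (DnS x).card)).card ≤ Fintype.card α - k := by
  classical
  set S := Finset.univ.filter (fun x : α => k ≤ (DnS x).card) with hS
  rcases S.eq_empty_or_nonempty with he | hne
  · rw [he]; simp
  · obtain ⟨m, hmS, hmin⟩ : ∃ m ∈ S, ∀ y ∈ S, ¬ y < m := by
      obtain ⟨m, hmS, hmin'⟩ := Finset.exists_min_image S (fun x => (DnS x).card) hne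
      refine ⟨m, hmS, fun y hyS hy => ?_⟩
      have hsub : DnS y ⊆ DnS m := fun z hz => mem_DnS.mpr ((mem_DnS.mp hz).trans hy)
      have hlt := Finset.card_lt_card (Finset.ssubset_iff_subset_ne.mpr ⟨hsub, fun he => by
        have hym : y ∈ DnS m := mem_DnS.mpr hy
        rw [← he, mem_DnS] at hym
        exact lt_irrefl _ hym⟩)
      exact absurd (hmin' y hyS) (not_le.mpr hlt)
    have hsub : DnS m ⊆ Finset.univ \ S := by
      intro y hy
      rw [mem_DnS] at hy
      rw [Finset.mem_sdiff]
      exact ⟨Finset.mem_univ _, fun hyS => hmin y hyS hy⟩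
    have h1 : k ≤ (DnS m).card := by
      have := Finset.mem_filter.mp hmS
      exact this.2
    have h2 := Finset.card_le_card hsub
    rw [Finset.card_sdiff_of_subset (Finset.subset_univ S), Finset.card_univ] at h2
    have h3 : S.card ≤ Fintype.card α := by
      rw [← Finset.card_univ]; exact Finset.card_le_card (Finset.subset_univ S)
    omega

lemma card_filter_ge_val {N : ℕ} (c : ℕ) :
    (@Finset.filter (Fin N) (fun y => c ≤ y.val) (Classical.decPred _) Finset.univ).card
      = N - c := by
  classical
  rcases lt_or_ge c N with hc | hc
  · have : (@Finset.filter (Fin N) (fun y => c ≤ y.val) (Classical.decPred _) Finset.univ)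
        = Finset.Ici (⟨c, hc⟩ : Fin N) := by
      ext y
      simp [Fin.le_def]
    rw [this, Fin.card_Ici]
  · have : (@Finset.filter (Fin N) (fun y => c ≤ y.val) (Classical.decPred _) Finset.univ)
        = ∅ := by
      ext y
      simp only [Finset.mem_filter, Finset.mem_univ, true_and, Finset.notMem_empty, iff_false]
      have := y.isLt
      omega
    rw [this]
    simp
    omega

lemma upward_closed_mem_iff {N : ℕ} (S : Finset (Fin N))
    (hup : ∀ i j : Fin N, i ≤ j → i ∈ S → j ∈ S) (i : Fin N) :
    i ∈ S ↔ N - S.card ≤ i.val := by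
  constructor
  · intro hi
    have hsub : Finset.Ici i ⊆ S := fun j hj => hup i j (Finset.mem_Ici.mp hj) hi
    have := Finset.card_le_card hsub
    rw [Fin.card_Ici] at this
    omega
  · intro hi
    by_contra hni
    have hsub : S ⊆ Finset.Ioi i := by
      intro j hj
      rw [Finset.mem_Ioi]
      by_contra hji
      exact hni (hup j i (le_of_not_gt hji) hj)
    have hcard := Finset.card_le_card hsub
    rw [Fin.card_Ioi] at hcard
    have := i.isLt
    omega



lemma card_le_fintype_card (x : α) : (DnS x).card ≤ Fintype.card α := by
  rw [← Finset.card_univ]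
  exact Finset.card_le_card (Finset.subset_univ _)

lemma main_gen (h : IsSemiorder α) :
    ∃ σ : Fin (Fintype.card α) ≃ α,
      (∀ i j : Fin (Fintype.card α), i ≤ j → (DnS (σ j)).card ≤ (DnS (σ i)).card) ∧
      (∀ a b : α, a < b ↔ Fintype.card α - (DnS b).card ≤ ((σ.symm a) : ℕ)) := by
  classical
  set N := Fintype.card α with hN
  let e : Fin N ≃ α := (Fintype.equivFin α).symm
  let key : α → ℕ ×ₗ ℕ := fun x => toLex ((UpS x).card, N - (DnS x).card)
  let π := Tuple.sort (key ∘ e)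
  set σ : Fin N ≃ α := (π : Equiv.Perm (Fin N)).trans e with hσ
  have hkey : ∀ i j : Fin N, i ≤ j → key (σ i) ≤ key (σ j) := by
    intro i j hij
    exact Tuple.monotone_sort (key ∘ e) hij
  have hkey' : ∀ i j : Fin N, i ≤ j →
      (UpS (σ i)).card < (UpS (σ j)).card ∨
      ((UpS (σ i)).card = (UpS (σ j)).card ∧
        N - (DnS (σ i)).card ≤ N - (DnS (σ j)).card) := by
    intro i j hij
    have := hkey i j hij
    rwa [Prod.Lex.le_iff] at this
  have hud : ∀ i j : Fin N, i ≤ j → (UpS (σ i)).card ≤ (UpS (σ j)).card := by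
    intro i j hij
    rcases hkey' i j hij with h1 | ⟨h1, -⟩
    · exact le_of_lt h1
    · exact le_of_eq h1
  have hdd : ∀ i j : Fin N, i ≤ j → (DnS (σ j)).card ≤ (DnS (σ i)).card := by
    intro i j hij
    rcases hkey' i j hij with h1 | ⟨-, h2⟩
    · have hsub := upS_subset_of_card_le h (le_of_lt h1)
      have hne : UpS (σ i) ≠ UpS (σ j) := by
        intro he; rw [he] at h1; exact lt_irrefl _ h1
      exact Finset.card_le_card
        (dnS_subset_of_upS_ssubset h (hsub.ssubset_of_ne hne))
    · have b1 := card_le_fintype_card (σ i)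
      have b2 := card_le_fintype_card (σ j)
      omega
  refine ⟨σ, hdd, ?_⟩
  intro a b
  set S : Finset (Fin N) := Finset.univ.filter (fun i => σ i < b) with hSdef
  have hup : ∀ i j : Fin N, i ≤ j → i ∈ S → j ∈ S := by
    intro i j hij hi
    rw [hSdef, Finset.mem_filter] at hi ⊢
    refine ⟨Finset.mem_univ _, ?_⟩
    have := upS_subset_of_card_le h (hud i j hij)
    exact mem_UpS.mp (this (mem_UpS.mpr hi.2))
  have hcard : S.card = (DnS b).card := by
    apply Finset.card_bij (fun i _ => σ i)
    · intro i hi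
      rw [mem_DnS]
      exact (Finset.mem_filter.mp hi).2
    · intro i _ j _ hij
      exact σ.injective hij
    · intro y hy
      refine ⟨σ.symm y, ?_, by simp⟩
      rw [hSdef, Finset.mem_filter]
      refine ⟨Finset.mem_univ _, ?_⟩
      rw [Equiv.apply_symm_apply]
      exact mem_DnS.mp hy
  have := upward_closed_mem_iff S hup (σ.symm a)
  rw [hcard] at this
  rw [← this, hSdef, Finset.mem_filter, Equiv.apply_symm_apply]
  simp

end Aux

section Canon

variable {n : ℕ}

def canon (r : Fin n → ℕ) (hm : ∀ i j : Fin n, i ≤ j → r j ≤ r i)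
    (hb : ∀ i : Fin n, r i ≤ n - 1 - i.val) : PartialOrder (Fin n) where
  le a b := a = b ∨ n - r b ≤ a.val
  lt a b := n - r b ≤ a.val
  le_refl a := Or.inl rfl
  lt_iff_le_not_ge := by
    intro a b
    show (n - r b ≤ a.val) ↔ (a = b ∨ n - r b ≤ a.val) ∧ ¬ (b = a ∨ n - r a ≤ b.val)
    constructor
    · intro h
      have hba : b.val < a.val := by
        have h1 := hb b; have h2 := b.isLt
        omega
      refine ⟨Or.inr h, ?_⟩
      rintro (rfl | h2)
      · exact absurd hba (lt_irrefl _)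
      · have h1 := hb a; have h3 := a.isLt
        omega
    · rintro ⟨rfl | h1, h2⟩
      · exact absurd (Or.inl rfl) h2
      · exact h1
  le_trans := by
    rintro a b c (rfl | h1) h2
    · exact h2
    rcases h2 with rfl | h2
    · exact Or.inr h1
    · have hcb : c.val < b.val := by
        have := hb c; have := c.isLt; omega
      have hrz : r b ≤ r c := hm c b (by rw [Fin.le_def]; omega)
      exact Or.inr (by omega)
  le_antisymm := by
    rintro a b (rfl | h1) h2
    · rfl
    rcases h2 with rfl | h2
    · rfl
    · exfalso
      have hba := hb a; have hbb := hb b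
      have := a.isLt; have := b.isLt
      omega

variable {r : Fin n → ℕ} {hm : ∀ i j : Fin n, i ≤ j → r j ≤ r i}
  {hb : ∀ i : Fin n, r i ≤ n - 1 - i.val}

lemma canon_le_iff {a b : Fin n} :
    @LE.le _ (canon r hm hb).toLE a b ↔ (a = b ∨ n - r b ≤ a.val) := Iff.rfl

lemma canon_lt_iff {a b : Fin n} :
    @LT.lt _ (canon r hm hb).toLT a b ↔ n - r b ≤ a.val := Iff.rfl

lemma canon_semiorder : @IsSemiorder (Fin n) (canon r hm hb) := by
  constructor
  · rintro ⟨x, y, z, w, hyx, hwz, ⟨hxz1, hxz2⟩, ⟨hxw1, hxw2⟩, ⟨hyz1, hyz2⟩, ⟨hyw1, hyw2⟩⟩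
    rw [canon_lt_iff] at hyx hwz
    rcases le_total (r x) (r z) with hrr | hrr
    · exact hyz1 (canon_le_iff.mpr (Or.inr (le_trans (Nat.sub_le_sub_left hrr n) hyx)))
    · exact hxw2 (canon_le_iff.mpr (Or.inr (le_trans (Nat.sub_le_sub_left hrr n) hwz)))
  · rintro ⟨x, y, z, w, hzy, hyx, ⟨hxw1, hxw2⟩, ⟨hyw1, hyw2⟩, ⟨hzw1, hzw2⟩⟩
    rw [canon_lt_iff] at hzy hyx
    have hwx : w.val < n - r x := by
      by_contra hc
      push_neg at hc
      exact hxw2 (canon_le_iff.mpr (Or.inr hc))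
    have hrw : r y ≤ r w :=
      hm w y (Fin.le_def.mpr (le_of_lt (lt_of_lt_of_le hwx hyx)))
    exact hzw1 (canon_le_iff.mpr (Or.inr (le_trans (Nat.sub_le_sub_left hrw n) hzy)))

lemma card_filter_ge_val' {N : ℕ} (c : ℕ) :
    (Finset.univ.filter (fun y : Fin N => c ≤ y.val)).card = N - c := by
  rcases lt_or_ge c N with hc | hc
  · have : (Finset.univ.filter (fun y : Fin N => c ≤ y.val))
        = Finset.Ici (⟨c, hc⟩ : Fin N) := by
      ext y
      simp [Fin.le_def]
    rw [this, Fin.card_Ici]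
  · have : (Finset.univ.filter (fun y : Fin N => c ≤ y.val)) = ∅ := by
      ext y
      simp only [Finset.mem_filter, Finset.mem_univ, true_and, Finset.notMem_empty, iff_false]
      have := y.isLt
      omega
    rw [this]
    simp
    omega

lemma canon_downDeg (x : Fin n) : downDeg (canon r hm hb) x = r x := by
  have h1 : downDeg (canon r hm hb) x
      = Nat.card {y : Fin n // n - r x ≤ y.val} := by
    apply Nat.card_congr
    apply Equiv.subtypeEquivRight
    intro y
    exact canon_lt_iff
  rw [h1, Nat.card_eq_fintype_card, Fintype.card_subtype, card_filter_ge_val']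
  have := hb x; have := x.isLt; omega

lemma canon_degMultiset : degMultiset (canon r hm hb) = Finset.univ.val.map r := by
  show Finset.univ.val.map (downDeg (canon r hm hb)) = Finset.univ.val.map r
  apply Multiset.map_congr rfl
  intro x _
  exact canon_downDeg x

end Canon

lemma downDeg_eq_card {n : ℕ} (P : PartialOrder (Fin n)) (x : Fin n) :
    downDeg P x = (@DnS (Fin n) _ P x).card :=
  @natCard_lt_eq (Fin n) _ P x

lemma main_fin {n : ℕ} (P : PartialOrder (Fin n)) (h : @IsSemiorder (Fin n) P) :
    ∃ σ : Fin n ≃ Fin n,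
      (∀ i j : Fin n, i ≤ j → (@DnS (Fin n) _ P (σ j)).card ≤ (@DnS (Fin n) _ P (σ i)).card) ∧
      (∀ a b : Fin n, @LT.lt _ P.toPreorder.toLT a b ↔
        n - (@DnS (Fin n) _ P b).card ≤ ((σ.symm a) : ℕ)) := by
  obtain ⟨σ, h1, h2⟩ := @main_gen (Fin n) _ P h
  refine ⟨(finCongr (Fintype.card_fin n)).symm.trans σ, ?_, ?_⟩
  · intro i j hij
    apply h1
    rw [Fin.le_def] at hij ⊢
    exact hij
  · intro a b
    constructor
    · intro hlt
      have h4 := (h2 a b).mp hlt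
      have hcard := Fintype.card_fin n
      have hXY : ((((finCongr (Fintype.card_fin n)).symm.trans σ).symm a : Fin n) : ℕ)
          = ((σ.symm a : Fin (Fintype.card (Fin n))) : ℕ) := rfl
      rw [hXY]
      omega
    · intro hle
      apply (h2 a b).mpr
      have hcard := Fintype.card_fin n
      have hXY : ((((finCongr (Fintype.card_fin n)).symm.trans σ).symm a : Fin n) : ℕ)
          = ((σ.symm a : Fin (Fintype.card (Fin n))) : ℕ) := rfl
      rw [hXY] at hle
      omega

lemma map_univ_comp_equiv {n : ℕ} (e : Fin n ≃ Fin n) (g : Fin n → ℕ) :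
    Finset.univ.val.map (fun i => g (e i)) = Finset.univ.val.map g := by
  conv_rhs => rw [← Finset.map_univ_equiv e]
  rw [Finset.map_val, Multiset.map_map]
  rfl

lemma antitone_ofFn_eq {n : ℕ} {f g : Fin n → ℕ}
    (hf : ∀ i j : Fin n, i ≤ j → f j ≤ f i) (hg : ∀ i j : Fin n, i ≤ j → g j ≤ g i)
    (h : Finset.univ.val.map f = Finset.univ.val.map g) : f = g := by
  rw [Fin.univ_val_map, Fin.univ_val_map] at h
  have hperm : (List.ofFn f).Perm (List.ofFn g) := Multiset.coe_eq_coe.mp h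
  have hsf : (List.ofFn f).Pairwise (· ≥ ·) :=
    List.pairwise_ofFn.mpr (fun i j hij => hf i j (le_of_lt hij))
  have hsg : (List.ofFn g).Pairwise (· ≥ ·) :=
    List.pairwise_ofFn.mpr (fun i j hij => hg i j (le_of_lt hij))
  exact List.ofFn_injective (List.Perm.eq_of_pairwise (fun a b _ _ h1 h2 => le_antisymm h2 h1) hsf hsg hperm)

lemma countP_map_univ {n : ℕ} (f : Fin n → ℕ) (p : ℕ → Prop) [DecidablePred p] :
    Multiset.countP p (Finset.univ.val.map f)
      = (Finset.univ.filter (fun x => p (f x))).card := by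
  rw [Multiset.countP_map]
  rfl


theorem statement19 (n : ℕ) :
    (∀ P Q : PartialOrder (Fin n), @IsSemiorder (Fin n) P → @IsSemiorder (Fin n) Q →
      degMultiset P = degMultiset Q →
      ∃ e : Fin n ≃ Fin n, ∀ a b : Fin n,
        (@LE.le _ P.toPreorder.toLE a b ↔ @LE.le _ Q.toPreorder.toLE (e a) (e b))) ∧
    (∀ P : PartialOrder (Fin n), @IsSemiorder (Fin n) P →
      ∀ r : Fin n → ℕ, (∀ i j : Fin n, i ≤ j → r j ≤ r i) →
      degMultiset P = Finset.univ.val.map r →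
      ∀ i : Fin n, r i ≤ n - 1 - i.val) ∧
    (∀ r : Fin n → ℕ, (∀ i j : Fin n, i ≤ j → r j ≤ r i) →
      (∀ i : Fin n, r i ≤ n - 1 - i.val) →
      ∃ P : PartialOrder (Fin n), @IsSemiorder (Fin n) P ∧
        degMultiset P = Finset.univ.val.map r) := by
  refine ⟨?_, ?_, ?_⟩
  · -- Part 1: uniqueness
    intro P Q hP hQ hdeg
    obtain ⟨σP, hPm, hPc⟩ := main_fin P hP
    obtain ⟨σQ, hQm, hQc⟩ := main_fin Q hQ
    set fP : Fin n → ℕ := fun i => (@DnS (Fin n) _ P (σP i)).card with hfP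
    set fQ : Fin n → ℕ := fun i => (@DnS (Fin n) _ Q (σQ i)).card with hfQ
    have hmultP : degMultiset P = Finset.univ.val.map fP := by
      rw [hfP, map_univ_comp_equiv σP (fun x => (@DnS (Fin n) _ P x).card)]
      exact Multiset.map_congr rfl (fun x _ => downDeg_eq_card P x)
    have hmultQ : degMultiset Q = Finset.univ.val.map fQ := by
      rw [hfQ, map_univ_comp_equiv σQ (fun x => (@DnS (Fin n) _ Q x).card)]
      exact Multiset.map_congr rfl (fun x _ => downDeg_eq_card Q x)
    have hf : fP = fQ :=
      antitone_ofFn_eq hPm hQm (by rw [← hmultP, hdeg, hmultQ])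
    set e : Fin n ≃ Fin n := σP.symm.trans σQ with he
    refine ⟨e, ?_⟩
    intro a b
    rw [@le_iff_lt_or_eq _ P a b, @le_iff_lt_or_eq _ Q (e a) (e b)]
    apply or_congr
    · rw [hPc a b, hQc (e a) (e b)]
      have h1 : σQ.symm (e a) = σP.symm a := by simp [he]
      have h3 : (@DnS (Fin n) _ P b).card = fP (σP.symm b) := by
        rw [hfP]; simp
      have h4 : (@DnS (Fin n) _ Q (e b)).card = fQ (σP.symm b) := by
        rw [hfQ]; simp [he]
      rw [h1, h3, h4, hf]
    · exact ⟨fun hab => by rw [hab], fun hab => e.injective hab⟩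
  · -- Part 2: the bound
    intro P hP r hr hdeg i
    classical
    have hcount := @count_dd (Fin n) _ P (r i)
    rw [Fintype.card_fin] at hcount
    have h1 : Multiset.countP (fun v => r i ≤ v) (degMultiset P)
        = (Finset.univ.filter (fun x : Fin n => r i ≤ downDeg P x)).card := by
      exact countP_map_univ (downDeg P) (fun v => r i ≤ v)
    have h1' : (Finset.univ.filter (fun x : Fin n => r i ≤ downDeg P x)).card
        = (Finset.univ.filter (fun x : Fin n => r i ≤ (@DnS (Fin n) _ P x).card)).card := by
      congr 1
      ext x
      simp [downDeg_eq_card P x]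
    have h2 : Multiset.countP (fun v => r i ≤ v) (Finset.univ.val.map r)
        = (Finset.univ.filter (fun j : Fin n => r i ≤ r j)).card :=
      countP_map_univ r (fun v => r i ≤ v)
    have h3 : (i : ℕ) + 1 ≤ (Finset.univ.filter (fun j : Fin n => r i ≤ r j)).card := by
      have hsplit := Finset.card_filter_add_card_filter_not
        (s := (Finset.univ : Finset (Fin n))) (p := fun j : Fin n => i.val + 1 ≤ j.val)
      have hA : (Finset.univ.filter (fun j : Fin n => i.val + 1 ≤ j.val)).card
          = n - (i.val + 1) := card_filter_ge_val' _
      rw [hA, Finset.card_univ, Fintype.card_fin] at hsplit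
      have hsub : Finset.univ.filter (fun j : Fin n => ¬ (i.val + 1 ≤ j.val))
          ⊆ Finset.univ.filter (fun j : Fin n => r i ≤ r j) := by
        intro j hj
        rw [Finset.mem_filter] at hj ⊢
        exact ⟨Finset.mem_univ _, hr j i (Fin.le_def.mpr (by omega))⟩
      have hle2 := Finset.card_le_card hsub
      have := i.isLt
      omega
    rw [hdeg] at h1
    rw [h2] at h1
    rw [h1'] at h1
    have := i.isLt
    omega
  · -- Part 3: existence
    intro r hr hbd
    exact ⟨canon r hr hbd, canon_semiorder, canon_degMultiset⟩

end Paper
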